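/- arXiv:1706.00102 — 3 statements merged into one kernel-verified Lean document; each statement's English description precedes it below -/
import Mathlib

section
/- Let z = r·e^(iθ) with e^(-2π) < r < 1 and δ = log(1/r). For any ζ = e^(it) with δ/2 ≤ t - θ ≤ δ, the Poisson kernel satisfies P_z(ζ) = (1/(2π))·(1 - r²)/|ζ - z|² ≥ 1/(32πδ). -/
open Real Complex

set_option maxHeartbeats 1000000 in
theorem poisson_kernel_lower_bound (r θ t : ℝ) (hr2 : Real.exp (-(2 * π)) < r) (hr1 : r < 1)
    (hδ1 : Real.log (1 / r) / 2 ≤ t - θ) (hδ2 : t - θ ≤ Real.log (1 / r)) :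
    1 / (32 * π * Real.log (1 / r)) ≤
      (1 / (2 * π)) * (1 - r ^ 2) /
        ‖Complex.exp (t * Complex.I) - r * Complex.exp (θ * Complex.I)‖ ^ 2 := by
  have hrpos : 0 < r := lt_trans (Real.exp_pos _) hr2
  set δ := Real.log (1 / r) with hδdef
  have hδeq : δ = -Real.log r := by rw [hδdef, one_div, Real.log_inv]
  have hδpos : 0 < δ := by
    rw [hδeq, neg_pos]
    exact Real.log_neg hrpos hr1
  have hδlt : δ < 2 * π := by
    have := Real.log_lt_log (Real.exp_pos _) hr2
    rw [Real.log_exp] at this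
    rw [hδeq]; linarith
  have hs := t - θ
  -- 1 - r ≤ δ
  have h1r : 1 - r ≤ δ := by
    have := Real.add_one_le_exp (-δ)
    have hre : Real.exp (-δ) = r := by
      rw [hδeq, neg_neg, Real.exp_log hrpos]
    rw [hre] at this; linarith
  -- abs^2 computation
  have habs : ‖Complex.exp (t * Complex.I) - r * Complex.exp (θ * Complex.I)‖ ^ 2
      = 1 - 2 * r * Real.cos (t - θ) + r ^ 2 := by
    rw [Complex.sq_norm, Complex.normSq_apply]
    simp [Complex.exp_mul_I, Complex.cos_ofReal_re, Complex.sin_ofReal_re, Real.cos_sub]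
    have ht := Real.sin_sq_add_cos_sq t
    have hθ := Real.sin_sq_add_cos_sq θ
    nlinarith [ht, hθ]
  -- upper bound on D
  have hcos : 1 - Real.cos (t - θ) ≤ (t - θ) ^ 2 / 2 := by
    have := Real.one_sub_sq_div_two_le_cos (x := t - θ)
    linarith
  have hsnn : 0 ≤ t - θ := le_trans (by positivity) hδ1
  have hs2 : (t - θ) ^ 2 ≤ δ ^ 2 := by nlinarith
  have hD : 1 - 2 * r * Real.cos (t - θ) + r ^ 2 ≤ 2 * δ ^ 2 := by
    nlinarith [hcos, hs2, sq_nonneg (1 - r)]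
  -- key: δ ≤ 8 * (1 - r^2)
  have hkey : δ ≤ 8 * (1 - r ^ 2) := by
    rcases le_or_gt r (2/5) with hc | hc
    · have hπ : π < 3.15 := Real.pi_lt_d2
      nlinarith
    · have hlog : δ ≤ 1 / r - 1 := by
        rw [hδdef]
        exact Real.log_le_sub_one_of_pos (by positivity)
      have h2 : δ * r ≤ 1 - r := by
        have := mul_le_mul_of_nonneg_right hlog hrpos.le
        rw [sub_mul, one_div, inv_mul_cancel₀ hrpos.ne'] at this
        linarith
      have h3 : (0:ℝ) ≤ (1 - r) * (8 * r * (1 + r) - 1) :=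
        mul_nonneg (by linarith) (by nlinarith)
      nlinarith [hrpos]
  -- finish
  rw [habs]
  have hDpos : 0 < 1 - 2 * r * Real.cos (t - θ) + r ^ 2 := by
    nlinarith [Real.neg_one_le_cos (t - θ), sq_nonneg (1 - r), Real.cos_le_one (t - θ)]
  have hπpos : 0 < π := Real.pi_pos
  have hDA : 1 - 2 * r * Real.cos (t - θ) + r ^ 2 ≤ 16 * δ * (1 - r ^ 2) := by
    nlinarith [mul_le_mul_of_nonneg_left hkey hδpos.le]
  rw [div_le_div_iff₀ (by positivity) hDpos]
  have hππ : π / π = 1 := div_self hπpos.ne'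
  calc 1 * (1 - 2 * r * Real.cos (t - θ) + r ^ 2) ≤ 16 * δ * (1 - r ^ 2) := by linarith
    _ = 16 * (π / π) * (δ * (1 - r ^ 2)) := by rw [hππ]; ring
    _ = 1 / (2 * π) * (1 - r ^ 2) * (32 * π * δ) := by ring
end

section
/- The winding map W : ℂ → ℂ, W(r·e^(iθ)) = r·e^(2iθ) (equivalently W(z) = z²/|z| for z ≠ 0, W(0) = 0), is 2-Lipschitz on ℂ. -/
open Real Complex

noncomputable def windingMap (z : ℂ) : ℂ := z ^ 2 / (‖z‖ : ℂ)

private lemma windingMap_key (z w : ℂ) (r s : ℝ) (hr0 : 0 < r) (hs0 : 0 < s)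
    (hr2 : r^2 = z.re^2 + z.im^2) (hs2 : s^2 = w.re^2 + w.im^2) :
    Complex.normSq ((s:ℂ)*z^2 - (r:ℂ)*w^2) ≤ 4 * Complex.normSq (z-w) * (r^2*s^2) := by
  set p := z.re*w.re + z.im*w.im with hp
  set q := z.im*w.re - z.re*w.im with hq
  have hL : Complex.normSq ((s:ℂ)*z^2 - (r:ℂ)*w^2) = s^2*r^4 + r^2*s^4 - 2*r*s*(p^2-q^2) := by
    simp only [Complex.normSq_apply, Complex.sub_re, Complex.sub_im, pow_two, Complex.mul_re,
      Complex.mul_im, Complex.ofReal_re, Complex.ofReal_im, hp, hq]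
    linear_combination (-(s^2*(z.re^2+z.im^2+r^2)))*hr2 + (-(r^2*(w.re^2+w.im^2+s^2)))*hs2
  have hR : 4 * Complex.normSq (z-w) * (r^2*s^2) = 4*r^2*s^2*(r^2+s^2-2*p) := by
    simp only [Complex.normSq_apply, Complex.sub_re, Complex.sub_im, hp]
    linear_combination (-(4*r^2*s^2))*hr2 + (-(4*r^2*s^2))*hs2
  have hpq : 2*r*s*(p^2+q^2) = 2*r*s*(r^2*s^2) := by
    have : p^2 + q^2 = r^2*s^2 := by
      rw [hp, hq, hr2, hs2]; ring
    rw [this]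
  rw [hL, hR]
  nlinarith [mul_nonneg (mul_pos hr0 hs0).le (sq_nonneg (p - r*s)),
    mul_nonneg (mul_nonneg (mul_pos hr0 hs0).le (mul_pos hr0 hs0).le) (sq_nonneg (r-s)), hpq]

theorem windingMap_lipschitz : LipschitzWith 2 windingMap := by
  apply LipschitzWith.of_dist_le_mul
  intro z w
  simp only [Complex.dist_eq, NNReal.coe_ofNat]
  rcases eq_or_ne z 0 with rfl | hz
  · simp only [windingMap, map_zero, Complex.ofReal_zero, ne_eq, OfNat.ofNat_ne_zero,
      not_false_eq_true, zero_pow, zero_div, zero_sub, norm_neg, norm_zero,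
      norm_div, Complex.norm_real, norm_norm, abs_abs, norm_pow]
    rcases eq_or_ne w 0 with rfl | hw
    · simp
    · have h : 0 < ‖w‖ := norm_pos_iff.mpr hw
      rw [div_le_iff₀ h]
      nlinarith [h]
  rcases eq_or_ne w 0 with rfl | hw
  · simp only [windingMap, map_zero, Complex.ofReal_zero, ne_eq, OfNat.ofNat_ne_zero,
      not_false_eq_true, zero_pow, zero_div, sub_zero, norm_zero,
      norm_div, Complex.norm_real, norm_norm, abs_abs, norm_pow]
    have h : 0 < ‖z‖ := norm_pos_iff.mpr hz
    rw [div_le_iff₀ h]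
    nlinarith [h]
  have hr0 : (0:ℝ) < ‖z‖ := norm_pos_iff.mpr hz
  have hs0 : (0:ℝ) < ‖w‖ := norm_pos_iff.mpr hw
  set r : ℝ := ‖z‖ with hrdef
  set s : ℝ := ‖w‖ with hsdef
  have hrc : (r:ℂ) ≠ 0 := by exact_mod_cast hr0.ne'
  have hsc : (s:ℂ) ≠ 0 := by exact_mod_cast hs0.ne'
  have key : windingMap z - windingMap w = ((s:ℂ) * z^2 - (r:ℂ) * w^2) / ((r:ℂ)*(s:ℂ)) := by
    unfold windingMap
    rw [← hrdef, ← hsdef]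
    field_simp
  rw [key, norm_div, norm_mul, Complex.norm_of_nonneg hr0.le, Complex.norm_of_nonneg hs0.le, div_le_iff₀ (by positivity)]
  have hr2 : r^2 = z.re^2 + z.im^2 := by
    rw [hrdef, Complex.sq_norm, Complex.normSq_apply]; ring
  have hs2 : s^2 = w.re^2 + w.im^2 := by
    rw [hsdef, Complex.sq_norm, Complex.normSq_apply]; ring
  have hsq : ‖(s:ℂ) * z^2 - (r:ℂ) * w^2‖^2 ≤ (2 * ‖z - w‖ * (r * s))^2 := by
    rw [Complex.sq_norm]
    have expand : ((2 * ‖z - w‖ * (r * s)))^2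
        = 4 * Complex.normSq (z - w) * (r^2 * s^2) := by
      rw [← Complex.sq_norm]; ring
    rw [expand]
    exact windingMap_key z w r s hr0 hs0 hr2 hs2
  have habs : 0 ≤ ‖(s:ℂ) * z^2 - (r:ℂ) * w^2‖ := norm_nonneg _
  have hrhs : 0 ≤ 2 * ‖z - w‖ * (r * s) := by positivity
  nlinarith [hsq, habs, hrhs]
end

section
/- Let f : 𝕋 → ℂ \ {0} be an (L, ℓ)-bi-Lipschitz embedding, let r = min_{z ∈ 𝕋} |f(z)| > 0, and let g : 𝕋 → ℂ \ {0} be a winding symmetrization of f, i.e. a homeomorphism with g(-z) = -g(z) and f(W(z)) = W(g(z)) for all z, where W(re^(iθ)) = re^(2iθ). Then g is (πL, rℓ/(2πL))-bi-Lipschitz. -/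
open Real Complex

lemma wm_abs (z : ℂ) : ‖windingMap z‖ = ‖z‖ := by
  rcases eq_or_ne z 0 with rfl | hz
  · simp [windingMap]
  · have h : ‖z‖ ≠ 0 := by simpa using hz
    rw [windingMap, norm_div, norm_pow, Complex.norm_real, Real.norm_eq_abs,
      _root_.abs_of_nonneg (norm_nonneg z), sq]
    field_simp

lemma wm_eq_sq {z : ℂ} (hz : ‖z‖ = 1) : windingMap z = z ^ 2 := by
  rw [windingMap, hz]
  simp

lemma lemA {u v : ℂ} (hu : u ≠ 0) (hv : v ≠ 0)
    (h : 0 ≤ (u * (starRingEnd ℂ) v).re) :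
    ‖u - v‖ ≤ ‖windingMap u - windingMap v‖ := by
  set s := ‖u‖ with hs_def
  set t := ‖v‖ with ht_def
  have hs : 0 < s := norm_pos_iff.mpr hu
  have ht : 0 < t := norm_pos_iff.mpr hv
  have hWsub : windingMap u - windingMap v
      = (((t : ℂ)) * u ^ 2 - ((s : ℂ)) * v ^ 2) / (((s : ℂ)) * ((t : ℂ))) := by
    have hs' : ((s : ℝ) : ℂ) ≠ 0 := by exact_mod_cast hs.ne'
    have ht' : ((t : ℝ) : ℂ) ≠ 0 := by exact_mod_cast ht.ne'
    rw [windingMap, windingMap, ← hs_def, ← ht_def, div_sub_div _ _ hs' ht']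
    congr 1
    ring
  set W := u * (starRingEnd ℂ) v with hW_def
  have hWabs : ‖W‖ = s * t := by
    rw [hW_def, norm_mul, Complex.norm_conj]
  have hnorm : W.re ^ 2 + W.im ^ 2 = (s * t) ^ 2 := by
    have h4 := Complex.sq_norm W
    rw [hWabs] at h4
    rw [Complex.normSq_apply] at h4
    nlinarith [h4]
  have hRle : W.re ≤ s * t := le_trans (le_abs_self _)
    (by rw [← hWabs]; exact Complex.abs_re_le_norm W)
  have e1 : Complex.normSq (u - v) = s ^ 2 + t ^ 2 - 2 * W.re := by
    rw [Complex.normSq_sub, ← Complex.sq_norm, ← Complex.sq_norm v]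
  have hcross : ((t : ℂ) * u ^ 2) * (starRingEnd ℂ) ((s : ℂ) * v ^ 2)
      = ((s * t : ℝ) : ℂ) * W ^ 2 := by
    rw [hW_def]
    push_cast
    rw [map_mul, map_pow, Complex.conj_ofReal]
    ring
  have e2 : Complex.normSq ((t : ℂ) * u ^ 2 - (s : ℂ) * v ^ 2)
      = t ^ 2 * s ^ 4 + s ^ 2 * t ^ 4 - 2 * (s * t) * (W.re ^ 2 - W.im ^ 2) := by
    rw [Complex.normSq_sub, hcross]
    have h1 : Complex.normSq ((t : ℂ) * u ^ 2) = t ^ 2 * s ^ 4 := by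
      rw [Complex.normSq_mul, Complex.normSq_ofReal, map_pow, ← Complex.sq_norm u]
      ring
    have h2 : Complex.normSq ((s : ℂ) * v ^ 2) = s ^ 2 * t ^ 4 := by
      rw [Complex.normSq_mul, Complex.normSq_ofReal, map_pow, ← Complex.sq_norm v]
      ring
    have h3 : (((s * t : ℝ) : ℂ) * W ^ 2).re = (s * t) * (W.re ^ 2 - W.im ^ 2) := by
      rw [Complex.re_ofReal_mul]
      congr 1
      rw [sq, Complex.mul_re]; ring
    rw [h1, h2, h3]; ring
  have key : Complex.normSq (u - v) ≤
      Complex.normSq ((t : ℂ) * u ^ 2 - (s : ℂ) * v ^ 2) / (s * t) ^ 2 := by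
    rw [le_div_iff₀ (by positivity), e1, e2]
    nlinarith [mul_nonneg (sub_nonneg.2 hRle) h, sq_nonneg W.im, mul_pos hs ht,
      sq_nonneg (s*t - W.re)]
  rw [Complex.norm_def, Complex.norm_def]
  apply Real.sqrt_le_sqrt
  rw [hWsub, map_div₀]
  have hden : Complex.normSq (((s : ℂ)) * ((t : ℂ))) = (s * t) ^ 2 := by
    rw [Complex.normSq_mul, Complex.normSq_ofReal, Complex.normSq_ofReal]; ring
  rw [hden]
  exact key

lemma lemB {u v : ℂ} {r : ℝ} (hr : 0 < r) (hu : r ≤ ‖u‖)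
    (hv : r ≤ ‖v‖) :
    r * ‖windingMap u - windingMap v‖
      ≤ ‖u - v‖ * ‖u + v‖ := by
  have hu0 : u ≠ 0 := by
    intro h; rw [h] at hu; simp at hu; linarith
  have hv0 : v ≠ 0 := by
    intro h; rw [h] at hv; simp at hv; linarith
  set s := ‖u‖ with hs_def
  set t := ‖v‖ with ht_def
  have hs : 0 < s := norm_pos_iff.mpr hu0
  have ht : 0 < t := norm_pos_iff.mpr hv0
  have hs' : ((s : ℝ) : ℂ) ≠ 0 := by exact_mod_cast hs.ne'
  have ht' : ((t : ℝ) : ℂ) ≠ 0 := by exact_mod_cast ht.ne'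
  have hWsub : windingMap u - windingMap v
      = (((t : ℂ)) * u ^ 2 - ((s : ℂ)) * v ^ 2) / (((s : ℂ)) * ((t : ℂ))) := by
    rw [windingMap, windingMap, ← hs_def, ← ht_def, div_sub_div _ _ hs' ht']
    congr 1
    ring
  set W := u * (starRingEnd ℂ) v with hW_def
  have hWabs : ‖W‖ = s * t := by
    rw [hW_def, norm_mul, Complex.norm_conj]
  have hnorm : W.re ^ 2 + W.im ^ 2 = (s * t) ^ 2 := by
    have h4 := Complex.sq_norm W
    rw [hWabs] at h4
    rw [Complex.normSq_apply] at h4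
    nlinarith [h4]
  have hcross : ((t : ℂ) * u ^ 2) * (starRingEnd ℂ) ((s : ℂ) * v ^ 2)
      = ((s * t : ℝ) : ℂ) * W ^ 2 := by
    rw [hW_def]
    push_cast
    rw [map_mul, map_pow, Complex.conj_ofReal]
    ring
  have e2 : Complex.normSq ((t : ℂ) * u ^ 2 - (s : ℂ) * v ^ 2)
      = t ^ 2 * s ^ 4 + s ^ 2 * t ^ 4 - 2 * (s * t) * (W.re ^ 2 - W.im ^ 2) := by
    rw [Complex.normSq_sub, hcross]
    have h1 : Complex.normSq ((t : ℂ) * u ^ 2) = t ^ 2 * s ^ 4 := by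
      rw [Complex.normSq_mul, Complex.normSq_ofReal, map_pow, ← Complex.sq_norm u]
      ring
    have h2 : Complex.normSq ((s : ℂ) * v ^ 2) = s ^ 2 * t ^ 4 := by
      rw [Complex.normSq_mul, Complex.normSq_ofReal, map_pow, ← Complex.sq_norm v]
      ring
    have h3 : (((s * t : ℝ) : ℂ) * W ^ 2).re = (s * t) * (W.re ^ 2 - W.im ^ 2) := by
      rw [Complex.re_ofReal_mul]
      congr 1
      rw [sq, Complex.mul_re]; ring
    rw [h1, h2, h3]; ring
  have e3 : Complex.normSq (u ^ 2 - v ^ 2)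
      = s ^ 4 + t ^ 4 - 2 * (W.re ^ 2 - W.im ^ 2) := by
    rw [Complex.normSq_sub]
    have h1 : Complex.normSq (u ^ 2) = s ^ 4 := by
      rw [map_pow, ← Complex.sq_norm u]; ring
    have h2 : Complex.normSq (v ^ 2) = t ^ 4 := by
      rw [map_pow, ← Complex.sq_norm v]; ring
    have h3 : (u ^ 2 * (starRingEnd ℂ) (v ^ 2)).re = W.re ^ 2 - W.im ^ 2 := by
      rw [show u ^ 2 * (starRingEnd ℂ) (v ^ 2) = W ^ 2 by rw [hW_def, map_pow]; ring]
      rw [sq, Complex.mul_re]; ring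
    rw [h1, h2, h3]
  -- rewrite goal
  have habs2 : ‖u - v‖ * ‖u + v‖ = ‖u ^ 2 - v ^ 2‖ := by
    rw [← norm_mul]
    congr 1
    ring
  rw [habs2, hWsub, norm_div]
  have hdenabs : ‖((s : ℂ)) * ((t : ℂ))‖ = s * t := by
    rw [norm_mul, Complex.norm_real, Real.norm_eq_abs, Complex.norm_real, Real.norm_eq_abs,
      _root_.abs_of_nonneg hs.le, _root_.abs_of_nonneg ht.le]
  rw [hdenabs, ← mul_div_assoc]
  rw [div_le_iff₀ (by positivity)]
  -- now square comparison
  have hL0 : 0 ≤ r * ‖(t : ℂ) * u ^ 2 - (s : ℂ) * v ^ 2‖ := by positivity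
  have hR0 : 0 ≤ ‖u ^ 2 - v ^ 2‖ * (s * t) := by positivity
  rw [← pow_le_pow_iff_left₀ hL0 hR0 (two_ne_zero)]
  rw [mul_pow, mul_pow, Complex.sq_norm, Complex.sq_norm, e2, e3]
  set X := W.re ^ 2 - W.im ^ 2 with hX_def
  have hX : X ≤ (s * t) ^ 2 := by nlinarith [sq_nonneg W.im]
  have hrst : r ^ 2 ≤ s * t := by nlinarith
  have hA : 0 ≤ s ^ 2 * t ^ 2 * (s - t) ^ 2 * ((s + t) ^ 2 - r ^ 2) := by
    apply mul_nonneg (by positivity)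
    nlinarith
  have hB : 0 ≤ 2 * (s * t) * (s * t - r ^ 2) * ((s * t) ^ 2 - X) := by
    apply mul_nonneg (mul_nonneg (by positivity) (by linarith)) (by linarith)
  linarith [hA, hB]

lemma chord_eq (θ : ℝ) :
    ‖1 - Complex.exp (θ * I)‖ = 2 * |Real.sin (θ / 2)| := by
  have hns : Complex.normSq (1 - Complex.exp (θ * I)) = 4 * Real.sin (θ / 2) ^ 2 := by
    rw [Complex.normSq_apply]
    simp only [Complex.sub_re, Complex.sub_im, Complex.one_re, Complex.one_im,
      Complex.exp_ofReal_mul_I_re, Complex.exp_ofReal_mul_I_im]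
    have h1 : Real.cos θ = 2 * Real.cos (θ / 2) ^ 2 - 1 := by
      rw [show θ = 2 * (θ / 2) by ring, Real.cos_two_mul]
      ring_nf
    have h2 := Real.sin_sq_add_cos_sq (θ / 2)
    have h3 := Real.sin_sq_add_cos_sq θ
    nlinarith [h1, h2, h3]
  rw [Complex.norm_def, hns,
    show 4 * Real.sin (θ / 2) ^ 2 = (2 * |Real.sin (θ / 2)|) ^ 2 by
      rw [mul_pow, _root_.sq_abs]; ring]
  exact Real.sqrt_sq (by positivity)

lemma exp_chord (x y : ℝ) :
    ‖Complex.exp (x * I) - Complex.exp (y * I)‖ ≤ |x - y| := by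
  have hexp : Complex.exp ((↑(x - y) : ℂ) * I) * Complex.exp (y * I)
      = Complex.exp (x * I) := by
    rw [← Complex.exp_add]
    congr 1
    push_cast
    ring
  have h : Complex.exp (x * I) - Complex.exp (y * I)
      = Complex.exp (y * I) * (1 - Complex.exp ((↑(x - y) : ℂ) * I)) * (-1) := by
    rw [mul_sub, mul_one, mul_comm (Complex.exp ((y : ℂ) * I)), hexp]
    ring
  rw [h, norm_mul, norm_mul, Complex.norm_exp_ofReal_mul_I, norm_neg, norm_one,
    one_mul, mul_one, chord_eq]
  calc 2 * |Real.sin ((x - y) / 2)| ≤ 2 * |(x - y) / 2| := by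
        have := Real.abs_sin_le_abs (x := (x - y) / 2)
        linarith
    _ = |x - y| := by rw [abs_div]; simp; ring

lemma keyUpper (g : ℂ → ℂ) (L r : ℝ) (hr0 : 0 < r)
    (hgcont : ContinuousOn g (Metric.sphere (0:ℂ) 1))
    (hL : 0 ≤ L)
    (hloc : ∀ z ∈ Metric.sphere (0:ℂ) 1, ∀ w ∈ Metric.sphere (0:ℂ) 1,
      ‖g z - g w‖ < r →
      ‖g z - g w‖ ≤ L * ‖z ^ 2 - w ^ 2‖)
    {a : ℂ} (ha : a ∈ Metric.sphere (0:ℂ) 1) {θ : ℝ} (hθ : 0 ≤ θ) :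
    ‖g a - g (a * Complex.exp (θ * I))‖ ≤ 2 * L * θ := by
  have ha1 : ‖a‖ = 1 := by
    simpa [Complex.dist_eq] using Metric.mem_sphere.mp ha
  set p : ℝ → ℂ := fun t => a * Complex.exp ((t : ℂ) * I) with hp_def
  have hp_mem : ∀ t, p t ∈ Metric.sphere (0:ℂ) 1 := by
    intro t
    simp [hp_def, Metric.mem_sphere, Complex.dist_eq, map_mul,
      Complex.norm_exp_ofReal_mul_I, ha1]
  have hp_cont : Continuous p :=
    continuous_const.mul (Complex.continuous_exp.comp
      (Complex.continuous_ofReal.mul continuous_const))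
  set q : ℝ → ℂ := g ∘ p with hq_def
  have hq_cont : Continuous q := hgcont.comp_continuous hp_cont hp_mem
  set A : Set ℝ := Set.Icc 0 θ ∩ {t | ‖q t - q 0‖ ≤ 2 * L * t} with hA_def
  have hA_closed : IsClosed A := by
    apply IsClosed.inter isClosed_Icc
    exact isClosed_le (continuous_norm.comp (hq_cont.sub continuous_const))
      (continuous_const.mul continuous_id)
  have hA0 : (0:ℝ) ∈ A := ⟨⟨le_refl 0, hθ⟩, by simp⟩
  have hA_bdd : BddAbove A := ⟨θ, fun x hx => hx.1.2⟩
  set m := sSup A with hm_def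
  have hmA : m ∈ A := hA_closed.csSup_mem ⟨0, hA0⟩ hA_bdd
  have hsq : ∀ t : ℝ, (p t) ^ 2 = a ^ 2 * Complex.exp (((2 * t : ℝ) : ℂ) * I) := by
    intro t
    have he : Complex.exp ((t : ℂ) * I) ^ 2 = Complex.exp (((2 * t : ℝ) : ℂ) * I) := by
      rw [← Complex.exp_nat_mul]
      congr 1
      push_cast
      ring
    rw [hp_def]
    simp only [mul_pow]
    rw [he]
  have hm_eq : m = θ := by
    by_contra hne
    have hmlt : m < θ := lt_of_le_of_ne hmA.1.2 hne
    obtain ⟨η, hη, hcont⟩ := Metric.continuous_iff.mp hq_cont m r hr0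
    set t₁ := min θ (m + η / 2) with ht₁_def
    have hmt₁ : m < t₁ := lt_min hmlt (by linarith)
    have ht₁θ : t₁ ≤ θ := min_le_left _ _
    have hd : dist t₁ m < η := by
      rw [Real.dist_eq, _root_.abs_of_nonneg (by linarith : (0:ℝ) ≤ t₁ - m)]
      have h := min_le_right θ (m + η / 2)
      have h' : t₁ ≤ m + η / 2 := by rw [ht₁_def]; exact h
      linarith
    have h1 : ‖q t₁ - q m‖ < r := by
      have := hcont t₁ hd
      rwa [Complex.dist_eq] at this
    have h2 : ‖q t₁ - q m‖ ≤ L * ‖(p t₁) ^ 2 - (p m) ^ 2‖ :=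
      hloc _ (hp_mem t₁) _ (hp_mem m) h1
    have h3 : ‖(p t₁) ^ 2 - (p m) ^ 2‖ ≤ 2 * (t₁ - m) := by
      rw [hsq t₁, hsq m, ← mul_sub, norm_mul]
      have ha2 : ‖a ^ 2‖ = 1 := by rw [norm_pow, ha1]; norm_num
      rw [ha2, one_mul]
      calc ‖Complex.exp (((2 * t₁ : ℝ) : ℂ) * I)
            - Complex.exp (((2 * m : ℝ) : ℂ) * I)‖
          ≤ |2 * t₁ - 2 * m| := exp_chord _ _
        _ = 2 * (t₁ - m) := by rw [_root_.abs_of_nonneg (by linarith)]; ring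
    have ht₁A : t₁ ∈ A := by
      refine ⟨⟨le_trans hmA.1.1 (le_of_lt hmt₁), ht₁θ⟩, ?_⟩
      have h4 : ‖q t₁ - q 0‖
          ≤ ‖q t₁ - q m‖ + ‖q m - q 0‖ :=
        norm_sub_le_norm_sub_add_norm_sub (q t₁) (q m) (q 0)
      have h5 : ‖q t₁ - q m‖ ≤ 2 * L * (t₁ - m) := by nlinarith [h2, h3]
      have h6 : ‖q m - q 0‖ ≤ 2 * L * m := hmA.2
      simp only [Set.mem_setOf_eq]
      linarith
    have := le_csSup hA_bdd ht₁A
    linarith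
  have hfin : ‖q θ - q 0‖ ≤ 2 * L * θ := by
    have h := hmA.2
    rw [hm_eq] at h
    exact h
  have hq0 : q 0 = g a := by
    simp [hq_def, hp_def]
  have hqθ : q θ = g (a * Complex.exp ((θ : ℂ) * I)) := rfl
  rw [show g a - g (a * Complex.exp ((θ : ℂ) * I)) = -(q θ - q 0) by
    rw [hq0, hqθ]; ring]
  rw [norm_neg]
  exact hfin

theorem winding_symmetrization_biLipschitz (f g : ℂ → ℂ) (L ℓ r : ℝ)
    (hr0 : 0 < r)
    (hf0 : ∀ z ∈ Metric.sphere (0 : ℂ) 1, f z ≠ 0)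
    (hbil : ∀ a ∈ Metric.sphere (0 : ℂ) 1, ∀ b ∈ Metric.sphere (0 : ℂ) 1,
      ℓ * ‖a - b‖ ≤ ‖f a - f b‖ ∧
      ‖f a - f b‖ ≤ L * ‖a - b‖)
    (hrmin : IsLeast {m : ℝ | ∃ z ∈ Metric.sphere (0 : ℂ) 1, m = ‖f z‖} r)
    (hgcont : ContinuousOn g (Metric.sphere (0 : ℂ) 1))
    (hg0 : ∀ z ∈ Metric.sphere (0 : ℂ) 1, g z ≠ 0)
    (hgsym : ∀ z ∈ Metric.sphere (0 : ℂ) 1, g (-z) = -g z)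
    (hfW : ∀ z ∈ Metric.sphere (0 : ℂ) 1, f (windingMap z) = windingMap (g z)) :
    ∀ a ∈ Metric.sphere (0 : ℂ) 1, ∀ b ∈ Metric.sphere (0 : ℂ) 1,
      (r * ℓ / (2 * π * L)) * ‖a - b‖ ≤ ‖g a - g b‖ ∧
      ‖g a - g b‖ ≤ (π * L) * ‖a - b‖ := by
  have hmem_iff : ∀ z : ℂ, z ∈ Metric.sphere (0:ℂ) 1 ↔ ‖z‖ = 1 := by
    intro z
    rw [Metric.mem_sphere, Complex.dist_eq, sub_zero]
  have h1mem : (1:ℂ) ∈ Metric.sphere (0:ℂ) 1 := by rw [hmem_iff]; simp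
  have hneg : ∀ z ∈ Metric.sphere (0:ℂ) 1, -z ∈ Metric.sphere (0:ℂ) 1 := by
    intro z hz
    rw [hmem_iff] at hz ⊢
    simpa using hz
  have hneg1 : (-1:ℂ) ∈ Metric.sphere (0:ℂ) 1 := hneg 1 h1mem
  have habs : ∀ z ∈ Metric.sphere (0:ℂ) 1, ‖z‖ = 1 := by
    intro z hz; rwa [hmem_iff] at hz
  have hWmem : ∀ z ∈ Metric.sphere (0:ℂ) 1, windingMap z ∈ Metric.sphere (0:ℂ) 1 := by
    intro z hz
    rw [hmem_iff, wm_abs]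
    exact habs z hz
  have habs2 : ‖(1:ℂ) - (-1)‖ = 2 := by norm_num
  have hL0 : 0 ≤ L := by
    have h := (hbil 1 h1mem (-1) hneg1).2
    rw [habs2] at h
    have h0 := norm_nonneg (f 1 - f (-1))
    linarith
  have hlL : ℓ ≤ L := by
    have h1 := (hbil 1 h1mem (-1) hneg1).1
    have h2 := (hbil 1 h1mem (-1) hneg1).2
    rw [habs2] at h1 h2
    linarith
  have hglb : ∀ z ∈ Metric.sphere (0:ℂ) 1, r ≤ ‖g z‖ := by
    intro z hz
    have h := hrmin.2 ⟨windingMap z, hWmem z hz, rfl⟩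
    rwa [hfW z hz, wm_abs] at h
  have hloc : ∀ z ∈ Metric.sphere (0:ℂ) 1, ∀ w ∈ Metric.sphere (0:ℂ) 1,
      ‖g z - g w‖ < r →
      ‖g z - g w‖ ≤ L * ‖z ^ 2 - w ^ 2‖ := by
    intro z hz w hw hlt
    have hu0 : g z ≠ 0 := hg0 z hz
    have hv0 : g w ≠ 0 := hg0 w hw
    have hRw : 0 ≤ (g z * (starRingEnd ℂ) (g w)).re := by
      have e1 := Complex.normSq_sub (g z) (g w)
      have h2 : Complex.normSq (g z - g w) < r ^ 2 := by
        rw [← Complex.sq_norm]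
        have := norm_nonneg (g z - g w)
        nlinarith
      have h3 : r ^ 2 ≤ Complex.normSq (g w) := by
        rw [← Complex.sq_norm]
        have := hglb w hw
        nlinarith
      have h4 : 0 ≤ Complex.normSq (g z) := Complex.normSq_nonneg _
      nlinarith
    have hA := lemA hu0 hv0 hRw
    rw [← hfW z hz, ← hfW w hw] at hA
    have hb2 := (hbil (windingMap z) (hWmem z hz) (windingMap w) (hWmem w hw)).2
    calc ‖g z - g w‖ ≤ ‖f (windingMap z) - f (windingMap w)‖ := hA
      _ ≤ L * ‖windingMap z - windingMap w‖ := hb2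
      _ = L * ‖z ^ 2 - w ^ 2‖ := by
          rw [wm_eq_sq (habs z hz), wm_eq_sq (habs w hw)]
  have hπL : r ≤ π * L := by
    have h := keyUpper g L r hr0 hgcont hL0 hloc h1mem (le_of_lt Real.pi_pos)
    rw [Complex.exp_pi_mul_I, mul_neg_one] at h
    rw [hgsym 1 h1mem, sub_neg_eq_add, show g 1 + g 1 = 2 * g 1 by ring,
      norm_mul, Complex.norm_two] at h
    have := hglb 1 h1mem
    nlinarith
  have hLpos : 0 < L := by
    rcases le_or_gt 0 L with h | h
    · rcases h.eq_or_lt with h' | h'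
      · exfalso; rw [← h'] at hπL; simp at hπL; linarith
      · exact h'
    · exfalso
      have : π * L < 0 := mul_neg_of_pos_of_neg Real.pi_pos h
      linarith
  -- Full upper bound
  have Hup : ∀ x ∈ Metric.sphere (0:ℂ) 1, ∀ y ∈ Metric.sphere (0:ℂ) 1,
      ‖g x - g y‖ ≤ π * L * ‖x - y‖ := by
    intro x hx y hy
    have hx1 : ‖x‖ = 1 := habs x hx
    have hy1 : ‖y‖ = 1 := habs y hy
    have hx0 : x ≠ 0 := by
      intro h; rw [h] at hx1; simp at hx1
    set θ := Complex.arg (y / x) with hθ_def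
    have hc1 : ‖y / x‖ = 1 := by rw [norm_div, hx1, hy1]; norm_num
    have hyx : y = x * Complex.exp ((θ : ℂ) * I) := by
      have h := Complex.norm_mul_exp_arg_mul_I (y / x)
      rw [hc1] at h
      simp only [Complex.ofReal_one, one_mul] at h
      rw [← hθ_def] at h
      field_simp [hx0] at h
      rw [← h]
      ring
    have hθlb : -π < θ := Complex.neg_pi_lt_arg _
    have hθub : θ ≤ π := Complex.arg_le_pi _
    have hchord : ‖x - y‖ = 2 * |Real.sin (θ / 2)| := by
      have hxy : x - y = x * (1 - Complex.exp ((θ : ℂ) * I)) := by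
        rw [hyx]; ring
      rw [hxy, norm_mul, hx1, one_mul, chord_eq]
    have habs_piv : |θ| ≤ π := abs_le.mpr ⟨le_of_lt hθlb, hθub⟩
    have h3 : |θ / 2| = |θ| / 2 := by
      rw [abs_div]; norm_num
    have habs_half : |θ / 2| ≤ π / 2 := by
      rw [h3]; linarith
    have hsin : |θ| ≤ π * |Real.sin (θ / 2)| := by
      have h2 := Real.mul_abs_le_abs_sin habs_half
      have hpi := Real.pi_pos
      rw [h3] at h2
      have h4 : 2 / π * (|θ| / 2) = |θ| / π := by ring
      rw [h4] at h2
      calc |θ| = π * (|θ| / π) := by field_simp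
        _ ≤ π * |Real.sin (θ / 2)| := by
            apply mul_le_mul_of_nonneg_left h2 hpi.le
    rcases le_or_gt 0 θ with hθ0 | hθ0
    · have h := keyUpper g L r hr0 hgcont hL0 hloc hx hθ0
      rw [← hyx] at h
      calc ‖g x - g y‖ ≤ 2 * L * θ := h
        _ ≤ π * L * (2 * |Real.sin (θ / 2)|) := by
            nlinarith [hsin, le_abs_self θ, hL0]
        _ = π * L * ‖x - y‖ := by rw [hchord]
    · have hxy2 : x = y * Complex.exp ((↑(-θ) : ℂ) * I) := by
        rw [hyx, mul_assoc, ← Complex.exp_add]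
        have : (θ : ℂ) * I + (↑(-θ) : ℂ) * I = 0 := by push_cast; ring
        rw [this, Complex.exp_zero, mul_one]
      have h := keyUpper g L r hr0 hgcont hL0 hloc hy (θ := -θ) (by linarith)
      rw [← hxy2] at h
      rw [show g x - g y = -(g y - g x) by ring, norm_neg]
      calc ‖g y - g x‖ ≤ 2 * L * (-θ) := h
        _ ≤ π * L * (2 * |Real.sin (θ / 2)|) := by
            nlinarith [hsin, neg_le_abs θ, hL0]
        _ = π * L * ‖x - y‖ := by rw [hchord]
  -- main statement
  intro a ha b hb
  refine ⟨?_, Hup a ha b hb⟩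
  have hga_lb : r ≤ ‖g a‖ := hglb a ha
  have hgb_lb : r ≤ ‖g b‖ := hglb b hb
  rcases le_or_gt ℓ 0 with hl0 | hl0
  · have h1 : r * ℓ ≤ 0 := mul_nonpos_iff.mpr (Or.inl ⟨hr0.le, hl0⟩)
    have hcoef : r * ℓ / (2 * π * L) ≤ 0 :=
      div_nonpos_iff.mpr (Or.inr ⟨h1, by positivity⟩)
    calc (r * ℓ / (2 * π * L)) * ‖a - b‖ ≤ 0 :=
          mul_nonpos_iff.mpr (Or.inr ⟨hcoef, norm_nonneg _⟩)
      _ ≤ ‖g a - g b‖ := norm_nonneg _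
  · by_cases hab : b = -a
    · have hgb : g b = - g a := by rw [hab]; exact hgsym a ha
      have hd : ‖g a - g b‖ = 2 * ‖g a‖ := by
        rw [hgb, sub_neg_eq_add, show g a + g a = 2 * g a by ring, norm_mul,
          Complex.norm_two]
      have hD : ‖a - b‖ ≤ 2 := by
        rw [hab, sub_neg_eq_add, show a + a = 2 * a by ring, norm_mul,
          Complex.norm_two, habs a ha]
        norm_num
      rw [div_mul_eq_mul_div, div_le_iff₀ (by positivity), hd]
      have hDnn : 0 ≤ ‖a - b‖ := norm_nonneg _
      have c1 : r * ℓ * ‖a - b‖ ≤ r * ℓ * 2 := by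
        nlinarith [mul_pos hr0 hl0]
      have c2 : r * ℓ * 2 ≤ r * L * 2 := by nlinarith [hr0]
      have c3 : 2 * r * (2 * π * L) ≤ 2 * ‖g a‖ * (2 * π * L) := by
        nlinarith [mul_pos Real.pi_pos hLpos]
      have c4 : r * L * 2 ≤ 2 * r * (2 * π * L) := by
        nlinarith [Real.pi_gt_three, mul_pos hr0 hLpos]
      linarith
    · have hSpos : 0 < ‖a + b‖ := by
        apply norm_pos_iff.mpr
        intro h
        exact hab (eq_neg_of_add_eq_zero_left (by linear_combination h))
      have hprod : ‖a - b‖ * ‖a + b‖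
          = ‖a ^ 2 - b ^ 2‖ := by
        rw [← norm_mul]; congr 1; ring
      have hWlb : ℓ * (‖a - b‖ * ‖a + b‖)
          ≤ ‖windingMap (g a) - windingMap (g b)‖ := by
        rw [← hfW a ha, ← hfW b hb]
        have hb2 := (hbil (windingMap a) (hWmem a ha) (windingMap b) (hWmem b hb)).1
        rw [hprod]
        calc ℓ * ‖a ^ 2 - b ^ 2‖
            = ℓ * ‖windingMap a - windingMap b‖ := by
              rw [wm_eq_sq (habs a ha), wm_eq_sq (habs b hb)]
          _ ≤ ‖f (windingMap a) - f (windingMap b)‖ := hb2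
      have hkey := lemB hr0 hga_lb hgb_lb
      have he : ‖g a + g b‖ ≤ π * L * ‖a + b‖ := by
        have h := Hup a ha (-b) (hneg b hb)
        rw [hgsym b hb, sub_neg_eq_add, sub_neg_eq_add] at h
        exact h
      have hchain : r * (ℓ * (‖a - b‖ * ‖a + b‖))
          ≤ ‖g a - g b‖ * (π * L * ‖a + b‖) := by
        calc r * (ℓ * (‖a - b‖ * ‖a + b‖))
            ≤ r * ‖windingMap (g a) - windingMap (g b)‖ :=
              mul_le_mul_of_nonneg_left hWlb hr0.le
          _ ≤ ‖g a - g b‖ * ‖g a + g b‖ := hkey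
          _ ≤ ‖g a - g b‖ * (π * L * ‖a + b‖) :=
              mul_le_mul_of_nonneg_left he (norm_nonneg _)
      have h2 : r * ℓ * ‖a - b‖ ≤ ‖g a - g b‖ * (π * L) := by
        apply le_of_mul_le_mul_right _ hSpos
        calc r * ℓ * ‖a - b‖ * ‖a + b‖
            = r * (ℓ * (‖a - b‖ * ‖a + b‖)) := by ring
          _ ≤ ‖g a - g b‖ * (π * L * ‖a + b‖) := hchain
          _ = ‖g a - g b‖ * (π * L) * ‖a + b‖ := by ring
      rw [div_mul_eq_mul_div, div_le_iff₀ (by positivity)]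
      have hDnn : 0 ≤ ‖a - b‖ := norm_nonneg _
      have hdnn : 0 ≤ ‖g a - g b‖ := norm_nonneg _
      nlinarith [h2, mul_pos Real.pi_pos hLpos]
end
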